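/- Let P, Q ∈ B_A(H) with APQ^{♯_A} = 0. Then (1/2)max{‖P+Q‖_A, ‖P−Q‖_A} ≤ ω_𝔸([[P,Q],[0,0]]) ≤ min{‖P+Q‖_A, ‖P−Q‖_A}. -/

import Mathlib

open ContinuousLinearMap

/-- The `A`-seminorm of a vector: `‖x‖_A = √⟨Ax, x⟩`. -/
noncomputable def vnormA {H : Type*} [NormedAddCommGroup H] [InnerProductSpace ℂ H]
    (A : H →L[ℂ] H) (x : H) : ℝ :=
  Real.sqrt (RCLike.re (inner ℂ (A x) x : ℂ))

/-- `T` is `A`-bounded, i.e. `T ∈ B_{A^{1/2}}(H)`. -/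
def ABounded {H : Type*} [NormedAddCommGroup H] [InnerProductSpace ℂ H]
    (A T : H →L[ℂ] H) : Prop :=
  ∃ c : ℝ, 0 < c ∧ ∀ x, vnormA A (T x) ≤ c * vnormA A x

/-- The `A`-operator seminorm `‖T‖_A = sup{‖Tx‖_A : ‖x‖_A = 1}`. -/
noncomputable def opNormA {H : Type*} [NormedAddCommGroup H] [InnerProductSpace ℂ H]
    (A T : H →L[ℂ] H) : ℝ :=
  sSup {c : ℝ | ∃ x : H, vnormA A x = 1 ∧ c = vnormA A (T x)}

/-- The `A`-numerical radius `ω_A(T) = sup{|⟨ATx, x⟩| : ‖x‖_A = 1}`. -/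
noncomputable def wA {H : Type*} [NormedAddCommGroup H] [InnerProductSpace ℂ H]
    (A T : H →L[ℂ] H) : ℝ :=
  sSup {c : ℝ | ∃ x : H, vnormA A x = 1 ∧ c = ‖(inner ℂ (A (T x)) x : ℂ)‖}

/-- `Ts` is the reduced (Douglas) solution of `AX = T*A`, i.e. `Ts = T^{♯_A}`. -/
def IsReducedAdjoint {H : Type*} [NormedAddCommGroup H] [InnerProductSpace ℂ H]
    [CompleteSpace H] (A T Ts : H →L[ℂ] H) : Prop :=
  A ∘L Ts = (ContinuousLinearMap.adjoint T) ∘L A ∧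
    ∀ y, Ts y ∈ closure (Set.range A)

/-- The `2 × 2` operator matrix `[[P, Q], [R, S]]` acting on `H ⊕ H` (with the `ℓ²` product
inner ℂ product). -/
noncomputable def blk {H : Type*} [NormedAddCommGroup H] [InnerProductSpace ℂ H]
    (P Q R S : H →L[ℂ] H) : WithLp 2 (H × H) →L[ℂ] WithLp 2 (H × H) :=
  letI e := (WithLp.prodContinuousLinearEquiv 2 ℂ H H)
  (e.symm.toContinuousLinearMap) ∘L
    ((P.comp (fst ℂ H H) + Q.comp (snd ℂ H H)).prod
      (R.comp (fst ℂ H H) + S.comp (snd ℂ H H))) ∘L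
    (e.toContinuousLinearMap)

/-- `𝔸 = diag(A, A)` on `H ⊕ H`. -/
noncomputable def AA {H : Type*} [NormedAddCommGroup H] [InnerProductSpace ℂ H]
    (A : H →L[ℂ] H) : WithLp 2 (H × H) →L[ℂ] WithLp 2 (H × H) :=
  blk A 0 0 A

section Gen
variable {K : Type*} [NormedAddCommGroup K] [InnerProductSpace ℂ K] [CompleteSpace K]
variable {A B : K →L[ℂ] K}

theorem innerA (hBsa : adjoint B = B) (hBB : B ∘L B = A) (x y : K) :
    (inner ℂ (A x) y : ℂ) = inner ℂ (B x) (B y) := by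
  have : A x = (adjoint B) (B x) := by rw [hBsa, ← hBB]; rfl
  rw [this, adjoint_inner_left]

theorem vnormA_eq (hBsa : adjoint B = B) (hBB : B ∘L B = A) (x : K) :
    vnormA A x = ‖B x‖ := by
  rw [vnormA, innerA hBsa hBB, inner_self_eq_norm_sq, Real.sqrt_sq (norm_nonneg _)]

end Gen

section Gen2
variable {K : Type*} [NormedAddCommGroup K] [InnerProductSpace ℂ K] [CompleteSpace K]
variable {A B : K →L[ℂ] K}

theorem adjA (hBsa : adjoint B = B) (hBB : B ∘L B = A) : adjoint A = A := by
  rw [← hBB, adjoint_comp, hBsa]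

theorem key_bound (hBsa : adjoint B = B) (hBB : B ∘L B = A) {G : K →L[ℂ] K}
    (hG : adjoint (A ∘L G) = A ∘L G) (x : K) :
    RCLike.re (inner ℂ (A (G x)) x : ℂ) ≤ ‖G‖ * ‖B x‖ ^ 2 := by
  have hAsa : adjoint A = A := adjA hBsa hBB
  have hGA : adjoint G ∘L A = A ∘L G := by
    rw [← hG, adjoint_comp, hAsa]
  have hpow : ∀ k : ℕ, adjoint (A ∘L (G ^ k)) = A ∘L (G ^ k) := by
    intro k
    induction k with
    | zero =>
      have : A ∘L (G ^ 0) = A := by ext v; simp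
      rw [this, hAsa]
    | succ k ih =>
      have h1 : A ∘L G ^ (k + 1) = (A ∘L G ^ k) ∘L G := by
        ext v; simp [pow_succ, mul_apply_eq_comp]
      have h2 : (adjoint G) ∘L (A ∘L G ^ k) = A ∘L G ^ (k + 1) := by
        ext v
        have h3 := congrArg (fun (S : K →L[ℂ] K) => S ((G ^ k) v)) hGA
        simp only [comp_apply] at h3 ⊢
        rw [h3, ← mul_apply_eq_comp G (G ^ k), ← pow_succ']
      rw [h1, adjoint_comp, ih]
      exact h2
  have hmovepow : ∀ (m : ℕ), adjoint (G ^ m) ∘L A = A ∘L (G ^ m) := by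
    intro m; rw [← hpow m, adjoint_comp, hAsa]
  -- step inequality
  have hstep : ∀ m : ℕ, ‖B ((G ^ m) x)‖ ^ 2 ≤ ‖B ((G ^ (m + m)) x)‖ * ‖B x‖ := by
    intro m
    have h1 : (‖B ((G ^ m) x)‖ : ℝ) ^ 2 = RCLike.re (inner ℂ (A ((G ^ m) x)) ((G ^ m) x) : ℂ) := by
      rw [innerA hBsa hBB, inner_self_eq_norm_sq]
    have h2 : (inner ℂ (A ((G ^ m) x)) ((G ^ m) x) : ℂ)
        = inner ℂ (B ((G ^ (m + m)) x)) (B x) := by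
      have h3 : (inner ℂ (A ((G ^ m) x)) ((G ^ m) x) : ℂ)
          = inner ℂ ((adjoint (G ^ m)) (A ((G ^ m) x))) x := by
        rw [adjoint_inner_left]
      rw [h3]
      have h4 : (adjoint (G ^ m)) (A ((G ^ m) x)) = A ((G ^ (m + m)) x) := by
        have h5 := congrArg (fun (S : K →L[ℂ] K) => S ((G ^ m) x)) (hmovepow m)
        simp only [comp_apply] at h5
        rw [h5, ← mul_apply_eq_comp (G ^ m) (G ^ m), ← pow_add]
      rw [h4, innerA hBsa hBB]
    rw [h1, h2]
    exact le_trans (RCLike.re_le_norm _) (norm_inner_le_norm _ _)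
  set r := ‖B x‖ with hr
  have hre : RCLike.re (inner ℂ (A (G x)) x : ℂ) ≤ ‖(inner ℂ (B (G x)) (B x) : ℂ)‖ := by
    rw [innerA hBsa hBB]; exact RCLike.re_le_norm _
  set a := ‖(inner ℂ (B (G x)) (B x) : ℂ)‖ with ha
  have ha0 : 0 ≤ a := norm_nonneg _
  rcases eq_or_lt_of_le (norm_nonneg (B x)) with hr0 | hr0
  · -- r = 0
    have hrz : r = 0 := hr.trans hr0.symm
    have h6 : a ≤ ‖B (G x)‖ * r := norm_inner_le_norm _ _
    have hz : a ≤ 0 := by rw [hrz, mul_zero] at h6; exact h6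
    calc RCLike.re (inner ℂ (A (G x)) x : ℂ) ≤ a := hre
      _ ≤ 0 := hz
      _ ≤ ‖G‖ * r ^ 2 := by positivity
  · -- r > 0
    have claim : ∀ n : ℕ, a ^ (2 ^ n) * r ≤ ‖B ((G ^ (2 ^ n)) x)‖ * r ^ (2 ^ (n + 1)) := by
      intro n
      induction n with
      | zero =>
        have h1 : a ≤ ‖B (G x)‖ * r := norm_inner_le_norm _ _
        have := mul_le_mul_of_nonneg_right h1 (le_of_lt hr0)
        simpa [pow_one, mul_assoc, sq] using this
      | succ n ih =>
        have hsq := mul_le_mul ih ih (by positivity) (by positivity)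
        have hw : ‖B ((G ^ (2 ^ n)) x)‖ ^ 2 ≤ ‖B ((G ^ (2 ^ n + 2 ^ n)) x)‖ * r := hstep (2 ^ n)
        have e1 : (2 : ℕ) ^ (n + 1) = 2 ^ n + 2 ^ n := by ring
        have key : a ^ (2 ^ (n + 1)) * r ^ 2
            ≤ (‖B ((G ^ (2 ^ (n + 1))) x)‖ * r ^ (2 ^ (n + 2))) * r := by
          calc a ^ (2 ^ (n + 1)) * r ^ 2
              = (a ^ (2 ^ n) * r) * (a ^ (2 ^ n) * r) := by rw [e1]; ring
            _ ≤ (‖B ((G ^ (2 ^ n)) x)‖ * r ^ (2 ^ (n + 1)))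
                * (‖B ((G ^ (2 ^ n)) x)‖ * r ^ (2 ^ (n + 1))) := hsq
            _ = ‖B ((G ^ (2 ^ n)) x)‖ ^ 2 * (r ^ (2 ^ (n + 1)) * r ^ (2 ^ (n + 1))) := by ring
            _ ≤ (‖B ((G ^ (2 ^ n + 2 ^ n)) x)‖ * r) * (r ^ (2 ^ (n + 1)) * r ^ (2 ^ (n + 1))) := by
                apply mul_le_mul_of_nonneg_right hw (by positivity)
            _ = (‖B ((G ^ (2 ^ (n + 1))) x)‖ * r ^ (2 ^ (n + 2))) * r := by
                rw [← e1]
                have e2 : (2 : ℕ) ^ (n + 2) = 2 ^ (n + 1) + 2 ^ (n + 1) := by ring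
                rw [e2, pow_add]; ring
        have hsq2 : a ^ (2 ^ (n + 1)) * r * r
            ≤ (‖B ((G ^ (2 ^ (n + 1))) x)‖ * r ^ (2 ^ (n + 2))) * r := by
          calc a ^ (2 ^ (n + 1)) * r * r = a ^ (2 ^ (n + 1)) * r ^ 2 := by ring
            _ ≤ _ := key
        exact le_of_mul_le_mul_right hsq2 hr0
    -- conclude a ≤ ‖G‖ * r ^ 2
    have hfinal : a ≤ ‖G‖ * r ^ 2 := by
      by_contra hlt
      push_neg at hlt
      have hGr0 : 0 ≤ ‖G‖ * r ^ 2 := by positivity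
      have ha' : 0 < a := lt_of_le_of_lt hGr0 hlt
      have hGn0 : 0 < ‖G‖ := by
        rcases eq_or_lt_of_le (norm_nonneg G) with h | h
        · exfalso
          have hG0 : G = 0 := by rwa [eq_comm, norm_eq_zero] at h
          have : a = 0 := by rw [ha, hG0]; simp
          exact absurd this (ne_of_gt ha')
        · exact h
      set q : ℝ := a / (‖G‖ * r ^ 2) with hqdef
      have hq1 : 1 < q := (one_lt_div (by positivity)).mpr hlt
      have hbound : ∀ n : ℕ, q ^ (2 ^ n) ≤ (‖B‖ * ‖x‖) / r := by
        intro n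
        have h1 := claim n
        have h2 : ‖B ((G ^ (2 ^ n)) x)‖ ≤ ‖B‖ * (‖G‖ ^ (2 ^ n) * ‖x‖) := by
          calc ‖B ((G ^ (2 ^ n)) x)‖ ≤ ‖B‖ * ‖(G ^ (2 ^ n)) x‖ := le_opNorm _ _
            _ ≤ ‖B‖ * (‖G ^ (2 ^ n)‖ * ‖x‖) := by
                apply mul_le_mul_of_nonneg_left (le_opNorm _ _) (norm_nonneg _)
            _ ≤ ‖B‖ * (‖G‖ ^ (2 ^ n) * ‖x‖) := by
                apply mul_le_mul_of_nonneg_left _ (norm_nonneg _)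
                exact mul_le_mul_of_nonneg_right (norm_pow_le' _ (by positivity)) (norm_nonneg _)
        have h3 : a ^ (2 ^ n) * r ≤ ‖B‖ * (‖G‖ ^ (2 ^ n) * ‖x‖) * r ^ (2 ^ (n + 1)) :=
          le_trans h1 (mul_le_mul_of_nonneg_right h2 (by positivity))
        rw [hqdef, div_pow, div_le_div_iff₀ (by positivity) hr0]
        have e3 : (‖G‖ * r ^ 2) ^ (2 ^ n) = ‖G‖ ^ (2 ^ n) * r ^ (2 ^ (n + 1)) := by
          rw [mul_pow, ← pow_mul]
          congr 1
          ring
        rw [e3]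
        calc a ^ 2 ^ n * r ≤ ‖B‖ * (‖G‖ ^ (2 ^ n) * ‖x‖) * r ^ (2 ^ (n + 1)) := h3
          _ = ‖B‖ * ‖x‖ * (‖G‖ ^ 2 ^ n * r ^ 2 ^ (n + 1)) := by ring
      obtain ⟨n, hn⟩ := pow_unbounded_of_one_lt ((‖B‖ * ‖x‖) / r) hq1
      have h4 : q ^ n ≤ q ^ (2 ^ n) := pow_le_pow_right₀ (le_of_lt hq1) (Nat.le_of_lt (Nat.lt_two_pow_self (n := n)))
      exact absurd (le_trans h4 (hbound n)) (not_le_of_gt hn)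
    exact le_trans hre hfinal

end Gen2

section Gen3
variable {K : Type*} [NormedAddCommGroup K] [InnerProductSpace ℂ K] [CompleteSpace K]
variable {A B : K →L[ℂ] K}

theorem bound_of_adj (hBsa : adjoint B = B) (hBB : B ∘L B = A) {S Ss : K →L[ℂ] K}
    (h : A ∘L Ss = adjoint S ∘L A) (x : K) :
    ‖B (S x)‖ ≤ Real.sqrt ‖Ss ∘L S‖ * ‖B x‖ := by
  have hAsa : adjoint A = A := adjA hBsa hBB
  have hSsA : adjoint Ss ∘L A = A ∘L S := by
    have h2 := congrArg adjoint h
    rw [adjoint_comp, adjoint_comp, hAsa, adjoint_adjoint] at h2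
    exact h2
  have hG : adjoint (A ∘L (Ss ∘L S)) = A ∘L (Ss ∘L S) := by
    calc adjoint (A ∘L (Ss ∘L S)) = (adjoint (Ss ∘L S)) ∘L A := by rw [adjoint_comp, hAsa]
      _ = adjoint S ∘L (adjoint Ss ∘L A) := by rw [adjoint_comp, comp_assoc]
      _ = adjoint S ∘L (A ∘L S) := by rw [hSsA]
      _ = (adjoint S ∘L A) ∘L S := by rw [comp_assoc]
      _ = (A ∘L Ss) ∘L S := by rw [h]
      _ = A ∘L (Ss ∘L S) := by rw [comp_assoc]
  have hk := key_bound hBsa hBB hG x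
  have h1 : (‖B (S x)‖ : ℝ) ^ 2 = RCLike.re (inner ℂ (A ((Ss ∘L S) x)) x : ℂ) := by
    have h2 : (inner ℂ (A (S x)) (S x) : ℂ) = inner ℂ ((adjoint S) (A (S x))) x := by
      rw [adjoint_inner_left]
    have h3 : (adjoint S) (A (S x)) = A ((Ss ∘L S) x) := by
      have h4 := congrArg (fun (F : K →L[ℂ] K) => F (S x)) h.symm
      simp only [comp_apply] at h4
      exact h4
    rw [← h3, ← h2, innerA hBsa hBB, inner_self_eq_norm_sq]
  have h5 : ‖B (S x)‖ ^ 2 ≤ ‖Ss ∘L S‖ * ‖B x‖ ^ 2 := by rw [h1]; exact hk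
  have h6 := Real.sqrt_le_sqrt h5
  rw [Real.sqrt_sq (norm_nonneg _), Real.sqrt_mul (norm_nonneg _), Real.sqrt_sq (norm_nonneg _)]
    at h6
  exact h6

theorem vnormA_nonneg (A : K →L[ℂ] K) (x : K) : 0 ≤ vnormA A x := Real.sqrt_nonneg _

theorem opNormA_nonneg (A T : K →L[ℂ] K) : 0 ≤ opNormA A T :=
  Real.sSup_nonneg (by rintro c ⟨x, hx, rfl⟩; exact vnormA_nonneg A (T x))

theorem wA_nonneg (A T : K →L[ℂ] K) : 0 ≤ wA A T :=
  Real.sSup_nonneg (by rintro c ⟨x, hx, rfl⟩; exact norm_nonneg _)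

theorem opNormA_bddAbove (hBsa : adjoint B = B) (hBB : B ∘L B = A) {T : K →L[ℂ] K} {c : ℝ}
    (hc : ∀ x, ‖B (T x)‖ ≤ c * ‖B x‖) :
    BddAbove {c' : ℝ | ∃ x : K, vnormA A x = 1 ∧ c' = vnormA A (T x)} := by
  refine ⟨max c 0, ?_⟩
  rintro c' ⟨x, hx, rfl⟩
  rw [vnormA_eq hBsa hBB] at hx ⊢
  calc ‖B (T x)‖ ≤ c * ‖B x‖ := hc x
    _ = c := by rw [hx, mul_one]
    _ ≤ max c 0 := le_max_left _ _

theorem opNormA_pointwise (hBsa : adjoint B = B) (hBB : B ∘L B = A) {T : K →L[ℂ] K} {c : ℝ}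
    (hc : ∀ x, ‖B (T x)‖ ≤ c * ‖B x‖) (x : K) :
    ‖B (T x)‖ ≤ opNormA A T * ‖B x‖ := by
  by_cases hx : ‖B x‖ = 0
  · have := hc x
    rw [hx, mul_zero] at this
    rw [hx, mul_zero]
    exact le_antisymm this (norm_nonneg _) ▸ le_refl _
  · have ht : (0:ℝ) < ‖B x‖ := lt_of_le_of_ne (norm_nonneg _) (Ne.symm hx)
    set t : ℝ := ‖B x‖ with htdef
    have hy : vnormA A (t⁻¹ • x) = 1 := by
      rw [vnormA_eq hBsa hBB, map_smul_of_tower, norm_smul, Real.norm_eq_abs, abs_inv,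
        abs_of_pos ht, ← htdef, inv_mul_cancel₀ (ne_of_gt ht)]
    have hmem : vnormA A (T (t⁻¹ • x)) ∈
        {c' : ℝ | ∃ x : K, vnormA A x = 1 ∧ c' = vnormA A (T x)} := ⟨_, hy, rfl⟩
    have hle := le_csSup (opNormA_bddAbove hBsa hBB hc) hmem
    have hval : vnormA A (T (t⁻¹ • x)) = t⁻¹ * ‖B (T x)‖ := by
      rw [vnormA_eq hBsa hBB, map_smul_of_tower, map_smul_of_tower, norm_smul,
        Real.norm_eq_abs, abs_inv, abs_of_pos ht]
    rw [hval] at hle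
    have := mul_le_mul_of_nonneg_right hle (le_of_lt ht)
    calc ‖B (T x)‖ = t⁻¹ * ‖B (T x)‖ * t := by field_simp
      _ ≤ opNormA A T * t := this

theorem wA_bddAbove (hBsa : adjoint B = B) (hBB : B ∘L B = A) {T : K →L[ℂ] K} {c : ℝ}
    (hc : ∀ x, ‖B (T x)‖ ≤ c * ‖B x‖) :
    BddAbove {c' : ℝ | ∃ x : K, vnormA A x = 1 ∧ c' = ‖(inner ℂ (A (T x)) x : ℂ)‖} := by
  refine ⟨max c 0, ?_⟩
  rintro c' ⟨x, hx, rfl⟩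
  rw [vnormA_eq hBsa hBB] at hx
  rw [innerA hBsa hBB]
  calc ‖(inner ℂ (B (T x)) (B x) : ℂ)‖ ≤ ‖B (T x)‖ * ‖B x‖ := norm_inner_le_norm _ _
    _ ≤ (c * ‖B x‖) * ‖B x‖ := mul_le_mul_of_nonneg_right (hc x) (norm_nonneg _)
    _ = c := by rw [hx]; ring
    _ ≤ max c 0 := le_max_left _ _

theorem wA_le_opNormA (hBsa : adjoint B = B) (hBB : B ∘L B = A) {T : K →L[ℂ] K} {c : ℝ}
    (hc : ∀ x, ‖B (T x)‖ ≤ c * ‖B x‖) : wA A T ≤ opNormA A T := by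
  apply Real.sSup_le _ (opNormA_nonneg A T)
  rintro c' ⟨x, hx, rfl⟩
  have h1 : ‖(inner ℂ (A (T x)) x : ℂ)‖ ≤ vnormA A (T x) := by
    rw [innerA hBsa hBB, vnormA_eq hBsa hBB]
    have hx1 : ‖B x‖ = 1 := by rw [← vnormA_eq hBsa hBB]; exact hx
    calc ‖(inner ℂ (B (T x)) (B x) : ℂ)‖ ≤ ‖B (T x)‖ * ‖B x‖ := norm_inner_le_norm _ _
      _ = ‖B (T x)‖ := by rw [hx1, mul_one]
  exact le_trans h1 (le_csSup (opNormA_bddAbove hBsa hBB hc) ⟨x, hx, rfl⟩)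

theorem wA_pointwise (hBsa : adjoint B = B) (hBB : B ∘L B = A) {T : K →L[ℂ] K} {c : ℝ}
    (hc : ∀ x, ‖B (T x)‖ ≤ c * ‖B x‖) (x : K) :
    ‖(inner ℂ (A (T x)) x : ℂ)‖ ≤ wA A T * ‖B x‖ ^ 2 := by
  by_cases hx : ‖B x‖ = 0
  · rw [hx]
    rw [innerA hBsa hBB]
    calc ‖(inner ℂ (B (T x)) (B x) : ℂ)‖ ≤ ‖B (T x)‖ * ‖B x‖ := norm_inner_le_norm _ _
      _ = 0 := by rw [hx, mul_zero]
      _ ≤ wA A T * 0 ^ 2 := by simp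
  · have ht : (0:ℝ) < ‖B x‖ := lt_of_le_of_ne (norm_nonneg _) (Ne.symm hx)
    set t : ℝ := ‖B x‖ with htdef
    have hy : vnormA A (t⁻¹ • x) = 1 := by
      rw [vnormA_eq hBsa hBB, map_smul_of_tower, norm_smul, Real.norm_eq_abs, abs_inv,
        abs_of_pos ht, ← htdef, inv_mul_cancel₀ (ne_of_gt ht)]
    have hmem : ‖(inner ℂ (A (T (t⁻¹ • x))) (t⁻¹ • x) : ℂ)‖ ∈
        {c' : ℝ | ∃ x : K, vnormA A x = 1 ∧ c' = ‖(inner ℂ (A (T x)) x : ℂ)‖} :=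
      ⟨_, hy, rfl⟩
    have hle := le_csSup (wA_bddAbove hBsa hBB hc) hmem
    have hval : ‖(inner ℂ (A (T (t⁻¹ • x))) (t⁻¹ • x) : ℂ)‖
        = t⁻¹ * t⁻¹ * ‖(inner ℂ (A (T x)) x : ℂ)‖ := by
      rw [innerA hBsa hBB, innerA hBsa hBB,
        map_smul_of_tower, map_smul_of_tower, map_smul_of_tower,
        RCLike.real_smul_eq_coe_smul (K := ℂ) t⁻¹ (B (T x)),
        RCLike.real_smul_eq_coe_smul (K := ℂ) t⁻¹ (B x),
        inner_smul_left, inner_smul_right, norm_mul, norm_mul, RCLike.norm_conj]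
      simp only [RCLike.norm_ofReal]
      rw [abs_inv, abs_of_pos ht]
      ring
    rw [hval] at hle
    have h2 := mul_le_mul_of_nonneg_right hle (by positivity : (0:ℝ) ≤ t ^ 2)
    have h3 : t⁻¹ * t⁻¹ * t ^ 2 = 1 := by
      rw [pow_two]
      field_simp
    calc ‖(inner ℂ (A (T x)) x : ℂ)‖
        = t⁻¹ * t⁻¹ * t ^ 2 * ‖(inner ℂ (A (T x)) x : ℂ)‖ := by rw [h3, one_mul]
      _ = t⁻¹ * t⁻¹ * ‖(inner ℂ (A (T x)) x : ℂ)‖ * t ^ 2 := by ring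
      _ ≤ wA A T * t ^ 2 := h2

end Gen3

section Gen4
variable {K : Type*} [NormedAddCommGroup K] [InnerProductSpace ℂ K] [CompleteSpace K]
variable {A B : K →L[ℂ] K}

theorem opNormA_le_opNormA (hBsa : adjoint B = B) (hBB : B ∘L B = A) {S1 S2 : K →L[ℂ] K}
    (h1 : A ∘L S2 = adjoint S1 ∘L A) (h2 : A ∘L S1 = adjoint S2 ∘L A) :
    opNormA A S1 ≤ opNormA A S2 := by
  apply Real.sSup_le _ (opNormA_nonneg A S2)
  rintro c ⟨x, hx, rfl⟩
  have hx1 : ‖B x‖ = 1 := by rw [← vnormA_eq hBsa hBB]; exact hx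
  have hcS2 := bound_of_adj hBsa hBB h2
  rw [vnormA_eq hBsa hBB]
  have hu2 : ‖B (S1 x)‖ ^ 2 = RCLike.re (inner ℂ (A (S2 (S1 x))) x : ℂ) := by
    have e1 : (inner ℂ (A (S1 x)) (S1 x) : ℂ) = inner ℂ ((adjoint S1) (A (S1 x))) x := by
      rw [adjoint_inner_left]
    have e2 : (adjoint S1) (A (S1 x)) = A (S2 (S1 x)) := by
      have h4 := congrArg (fun (F : K →L[ℂ] K) => F (S1 x)) h1
      simp only [comp_apply] at h4
      exact h4.symm
    calc ‖B (S1 x)‖ ^ 2 = RCLike.re (inner ℂ (A (S1 x)) (S1 x) : ℂ) := by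
          rw [innerA hBsa hBB, inner_self_eq_norm_sq]
      _ = RCLike.re (inner ℂ (A (S2 (S1 x))) x : ℂ) := by rw [e1, e2]
  have hle : ‖B (S1 x)‖ ^ 2 ≤ opNormA A S2 * ‖B (S1 x)‖ := by
    calc ‖B (S1 x)‖ ^ 2 = RCLike.re (inner ℂ (A (S2 (S1 x))) x : ℂ) := hu2
      _ ≤ ‖(inner ℂ (B (S2 (S1 x))) (B x) : ℂ)‖ := by
          rw [innerA hBsa hBB]; exact RCLike.re_le_norm _
      _ ≤ ‖B (S2 (S1 x))‖ * ‖B x‖ := norm_inner_le_norm _ _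
      _ = ‖B (S2 (S1 x))‖ := by rw [hx1, mul_one]
      _ ≤ opNormA A S2 * ‖B (S1 x)‖ := opNormA_pointwise hBsa hBB hcS2 (S1 x)
  rcases eq_or_lt_of_le (norm_nonneg (B (S1 x))) with h0 | h0
  · rw [← h0]; exact opNormA_nonneg A S2
  · nlinarith [hle, h0]

theorem opNormA_le_two_wA (hBsa : adjoint B = B) (hBB : B ∘L B = A) {T : K →L[ℂ] K} {c : ℝ}
    (hc : ∀ x, ‖B (T x)‖ ≤ c * ‖B x‖) : opNormA A T ≤ 2 * wA A T := by
  apply Real.sSup_le _ (by have := wA_nonneg A T; linarith)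
  rintro c' ⟨x, hx, rfl⟩
  have hx1 : ‖B x‖ = 1 := by rw [← vnormA_eq hBsa hBB]; exact hx
  rw [vnormA_eq hBsa hBB]
  have bnd : ∀ w : K, ‖(inner ℂ (A (T w)) w : ℂ)‖ ≤ wA A T * ‖B w‖ ^ 2 := by
    intro w
    exact wA_pointwise hBsa hBB hc w
  have sumbound : ∀ u v : K, ‖B u‖ = 1 → ‖B v‖ = 1 →
      ‖(inner ℂ (A (T u)) v : ℂ) + inner ℂ (A (T v)) u‖ ≤ 2 * wA A T := by
    intro u v hu hv
    have polar : (inner ℂ (A (T (u+v))) (u+v) : ℂ) - inner ℂ (A (T (u-v))) (u-v)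
        = 2 * ((inner ℂ (A (T u)) v : ℂ) + inner ℂ (A (T v)) u) := by
      simp only [map_add, map_sub, inner_add_left, inner_add_right, inner_sub_left,
        inner_sub_right]
      ring
    have h1 : ‖(inner ℂ (A (T (u+v))) (u+v) : ℂ) - inner ℂ (A (T (u-v))) (u-v)‖
        ≤ wA A T * ‖B (u+v)‖ ^ 2 + wA A T * ‖B (u-v)‖ ^ 2 :=
      le_trans (norm_sub_le _ _) (add_le_add (bnd _) (bnd _))
    have h2 : ‖B (u+v)‖ ^ 2 + ‖B (u-v)‖ ^ 2 = 4 := by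
      have hp := parallelogram_law_with_norm ℂ (B u) (B v)
      rw [hu, hv] at hp
      rw [map_add, map_sub, pow_two, pow_two]
      linarith [hp]
    have h3 : ‖(2:ℂ) * ((inner ℂ (A (T u)) v : ℂ) + inner ℂ (A (T v)) u)‖ ≤ wA A T * 4 := by
      rw [← polar]
      calc ‖(inner ℂ (A (T (u+v))) (u+v) : ℂ) - inner ℂ (A (T (u-v))) (u-v)‖
          ≤ wA A T * ‖B (u+v)‖ ^ 2 + wA A T * ‖B (u-v)‖ ^ 2 := h1
        _ = wA A T * (‖B (u+v)‖ ^ 2 + ‖B (u-v)‖ ^ 2) := by ring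
        _ = wA A T * 4 := by rw [h2]
    rw [norm_mul] at h3
    have h4 : ‖(2:ℂ)‖ = 2 := by norm_num
    rw [h4] at h3
    linarith
  have key : ∀ u v : K, ‖B u‖ = 1 → ‖B v‖ = 1 →
      ‖(inner ℂ (A (T u)) v : ℂ)‖ ≤ 2 * wA A T := by
    intro u v hu hv
    have hIu : ‖B (Complex.I • u)‖ = 1 := by
      rw [map_smul, norm_smul]
      simp [hu]
    have h4 := sumbound u v hu hv
    have h5 := sumbound (Complex.I • u) v hIu hv
    have e5 : (inner ℂ (A (T (Complex.I • u))) v : ℂ) + inner ℂ (A (T v)) (Complex.I • u)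
        = -Complex.I * ((inner ℂ (A (T u)) v : ℂ) - inner ℂ (A (T v)) u) := by
      rw [map_smul, map_smul, inner_smul_left, inner_smul_right]
      simp [Complex.conj_I]
      ring
    rw [e5, norm_mul] at h5
    have h6 : ‖-Complex.I‖ = 1 := by simp
    rw [h6, one_mul] at h5
    have e6 : (inner ℂ (A (T u)) v : ℂ) =
        (((inner ℂ (A (T u)) v : ℂ) + inner ℂ (A (T v)) u)
          + ((inner ℂ (A (T u)) v : ℂ) - inner ℂ (A (T v)) u)) / 2 := by ring
    have e7 := norm_add_le ((inner ℂ (A (T u)) v : ℂ) + inner ℂ (A (T v)) u)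
        ((inner ℂ (A (T u)) v : ℂ) - inner ℂ (A (T v)) u)
    have e8 : ((inner ℂ (A (T u)) v : ℂ) + inner ℂ (A (T v)) u)
        + ((inner ℂ (A (T u)) v : ℂ) - inner ℂ (A (T v)) u)
        = (2:ℂ) * (inner ℂ (A (T u)) v : ℂ) := by ring
    rw [e8, norm_mul] at e7
    have e9 : ‖(2:ℂ)‖ = 2 := by norm_num
    rw [e9] at e7
    linarith
  rcases eq_or_lt_of_le (norm_nonneg (B (T x))) with h0 | h0
  · rw [← h0]
    have := wA_nonneg A T
    linarith
  · set t := ‖B (T x)‖ with htd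
    have hη : ‖B (t⁻¹ • T x)‖ = 1 := by
      rw [map_smul_of_tower, norm_smul, Real.norm_eq_abs, abs_inv, abs_of_pos h0, ← htd,
        inv_mul_cancel₀ (ne_of_gt h0)]
    have h7 := key x (t⁻¹ • T x) hx1 hη
    have e7 : (inner ℂ (A (T x)) (t⁻¹ • T x) : ℂ) = (t⁻¹ : ℂ) * inner ℂ (A (T x)) (T x) := by
      rw [RCLike.real_smul_eq_coe_smul (K := ℂ), inner_smul_right]
      push_cast
      rfl
    have e8 : RCLike.re (inner ℂ (A (T x)) (T x) : ℂ) = t ^ 2 := by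
      rw [innerA hBsa hBB, inner_self_eq_norm_sq]
    have e9 : RCLike.re ((t⁻¹ : ℂ) * inner ℂ (A (T x)) (T x)) = t⁻¹ * t ^ 2 := by
      have e10 : RCLike.re ((t⁻¹ : ℂ) * inner ℂ (A (T x)) (T x))
          = t⁻¹ * RCLike.re (inner ℂ (A (T x)) (T x) : ℂ) := by simp
      rw [e10, e8]
    calc t = t⁻¹ * t ^ 2 := by
          rw [pow_two, ← mul_assoc, inv_mul_cancel₀ (ne_of_gt h0), one_mul]
      _ = RCLike.re ((t⁻¹ : ℂ) * inner ℂ (A (T x)) (T x)) := e9.symm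
      _ = RCLike.re (inner ℂ (A (T x)) (t⁻¹ • T x) : ℂ) := by rw [e7]
      _ ≤ ‖(inner ℂ (A (T x)) (t⁻¹ • T x) : ℂ)‖ := RCLike.re_le_norm _
      _ ≤ 2 * wA A T := h7

end Gen4


section Blk
variable {H : Type*} [NormedAddCommGroup H] [InnerProductSpace ℂ H] [CompleteSpace H]

local notation "e2" => WithLp.prodContinuousLinearEquiv 2 ℂ H H

theorem blk_apply (P Q R S : H →L[ℂ] H) (a b : H) :
    (blk P Q R S) ((e2).symm (a, b)) = (e2).symm (P a + Q b, R a + S b) := rfl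

theorem inner_E (a b c d : H) :
    (inner ℂ ((e2).symm (a, b)) ((e2).symm (c, d)) : ℂ) = inner ℂ a c + inner ℂ b d := rfl

theorem ximk (ξ : WithLp 2 (H × H)) : ξ = (e2).symm ((e2 ξ).1, (e2 ξ).2) := rfl

theorem normE (ζ : WithLp 2 (H × H)) : ‖ζ‖ ^ 2 = ‖(e2 ζ).1‖ ^ 2 + ‖(e2 ζ).2‖ ^ 2 := by
  have h1 : (inner ℂ ζ ζ : ℂ) = inner ℂ (e2 ζ).1 (e2 ζ).1 + inner ℂ (e2 ζ).2 (e2 ζ).2 := rfl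
  have h2 := inner_self_eq_norm_sq (𝕜 := ℂ) ζ
  rw [h1, map_add, inner_self_eq_norm_sq, inner_self_eq_norm_sq] at h2
  linarith

theorem adjoint_blk (P Q R S : H →L[ℂ] H) :
    ContinuousLinearMap.adjoint (blk P Q R S)
      = blk (ContinuousLinearMap.adjoint P) (ContinuousLinearMap.adjoint R)
          (ContinuousLinearMap.adjoint Q) (ContinuousLinearMap.adjoint S) := by
  symm
  rw [ContinuousLinearMap.eq_adjoint_iff]
  intro ξ η
  rw [ximk ξ, ximk η]
  rw [blk_apply, blk_apply, inner_E, inner_E]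
  simp only [inner_add_left, inner_add_right, ContinuousLinearMap.adjoint_inner_left]
  ring

theorem blk_comp (P Q R S P' Q' R' S' : H →L[ℂ] H) :
    (blk P Q R S) ∘L (blk P' Q' R' S')
      = blk (P ∘L P' + Q ∘L R') (P ∘L Q' + Q ∘L S') (R ∘L P' + S ∘L R')
          (R ∘L Q' + S ∘L S') := by
  ext ξ
  conv_lhs => rw [ximk ξ]
  conv_rhs => rw [ximk ξ]
  rw [comp_apply, blk_apply, blk_apply, blk_apply]
  congr 1
  simp only [map_add, add_apply, comp_apply]
  exact Prod.ext (by abel) (by abel)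

end Blk

set_option maxHeartbeats 2000000 in
theorem stmt18 {H : Type*} [NormedAddCommGroup H] [InnerProductSpace ℂ H] [CompleteSpace H]
    (A : H →L[ℂ] H) (hA : A.IsPositive)
    (P Q Qs : H →L[ℂ] H) (hP : ∃ Ps, IsReducedAdjoint A P Ps)
    (hQ : IsReducedAdjoint A Q Qs) (h0 : A ∘L (P ∘L Qs) = 0) :
    (1 / 2) * max (opNormA A (P + Q)) (opNormA A (P - Q)) ≤
        wA (AA A) (blk P Q 0 0) ∧
      wA (AA A) (blk P Q 0 0) ≤ min (opNormA A (P + Q)) (opNormA A (P - Q)) := by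
  classical
  obtain ⟨Ps, hPs', _hPr⟩ := hP
  obtain ⟨hQs', _hQr⟩ := hQ
  obtain ⟨B, hBsa, hBB⟩ : ∃ B : H →L[ℂ] H, adjoint B = B ∧ B ∘L B = A := by
    refine ⟨CFC.sqrt A, ?_, ?_⟩
    · have h : (CFC.sqrt A).IsPositive := by
        rw [← ContinuousLinearMap.nonneg_iff_isPositive]
        exact CFC.sqrt_nonneg A
      exact h.isSelfAdjoint.adjoint_eq
    · have := CFC.sqrt_mul_sqrt_self A (by rwa [ContinuousLinearMap.nonneg_iff_isPositive])
      simpa [ContinuousLinearMap.mul_def] using this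
  have hAsa : adjoint A = A := adjA hBsa hBB
  have hz : ContinuousLinearMap.adjoint (0 : H →L[ℂ] H) = 0 := by simp
  have h𝔹sa : adjoint (blk B 0 0 B) = blk B 0 0 B := by
    rw [adjoint_blk, hBsa, hz]
  have h𝔹𝔹 : (blk B 0 0 B) ∘L (blk B 0 0 B) = AA A := by
    rw [blk_comp]
    simp only [zero_comp, comp_zero, add_zero, zero_add, hBB]
    rfl
  -- adjoint transfer facts
  have hsP : A ∘L P = adjoint Ps ∘L A := by
    have h1 := congrArg adjoint hPs'
    rw [adjoint_comp, adjoint_comp, adjoint_adjoint, hAsa] at h1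
    exact h1.symm
  have hsQ : A ∘L Q = adjoint Qs ∘L A := by
    have h1 := congrArg adjoint hQs'
    rw [adjoint_comp, adjoint_comp, adjoint_adjoint, hAsa] at h1
    exact h1.symm
  have h0' : A ∘L (Q ∘L Ps) = 0 := by
    have h1 := congrArg adjoint h0
    rw [adjoint_comp, hAsa] at h1
    have h2 : adjoint (P ∘L Qs) ∘L A = A ∘L (Q ∘L Ps) := by
      rw [adjoint_comp, comp_assoc, ← hPs', ← comp_assoc, ← hsQ, comp_assoc]
    rw [← h2, h1]
    simp
  -- R facts
  have hRsp : A ∘L (Ps + Qs) = adjoint (P + Q) ∘L A := by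
    rw [comp_add, map_add, add_comp, hPs', hQs']
  have hRsm : A ∘L (Ps - Qs) = adjoint (P - Q) ∘L A := by
    rw [comp_sub, map_sub, sub_comp, hPs', hQs']
  have hsRp : A ∘L (P + Q) = adjoint (Ps + Qs) ∘L A := by
    rw [comp_add, map_add, add_comp, hsP, hsQ]
  have hsRm : A ∘L (P - Q) = adjoint (Ps - Qs) ∘L A := by
    rw [comp_sub, map_sub, sub_comp, hsP, hsQ]
  -- block adjoint facts
  have hTs : AA A ∘L (blk Ps 0 Qs 0) = adjoint (blk P Q 0 0) ∘L AA A := by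
    show (blk A 0 0 A) ∘L _ = _ ∘L (blk A 0 0 A)
    rw [adjoint_blk, blk_comp, blk_comp]
    simp only [zero_comp, comp_zero, add_zero, zero_add, hz, hPs', hQs']
  have hsT : AA A ∘L (blk P Q 0 0) = adjoint (blk Ps 0 Qs 0) ∘L AA A := by
    show (blk A 0 0 A) ∘L _ = _ ∘L (blk A 0 0 A)
    rw [adjoint_blk, blk_comp, blk_comp]
    simp only [zero_comp, comp_zero, add_zero, zero_add, hz, hsP, hsQ]
  -- pointwise bounds
  have hbT := bound_of_adj h𝔹sa h𝔹𝔹 hTs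
  have hbTs := bound_of_adj h𝔹sa h𝔹𝔹 hsT
  have hbRsp := bound_of_adj hBsa hBB hsRp
  have hbRsm := bound_of_adj hBsa hBB hsRm
  -- main generic inequalities
  have W_le : wA (AA A) (blk P Q 0 0) ≤ opNormA (AA A) (blk P Q 0 0) :=
    wA_le_opNormA h𝔹sa h𝔹𝔹 hbT
  have two_w : opNormA (AA A) (blk P Q 0 0) ≤ 2 * wA (AA A) (blk P Q 0 0) :=
    opNormA_le_two_wA h𝔹sa h𝔹𝔹 hbT
  have hNT : opNormA (AA A) (blk P Q 0 0) = opNormA (AA A) (blk Ps 0 Qs 0) :=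
    le_antisymm (opNormA_le_opNormA h𝔹sa h𝔹𝔹 hTs hsT)
      (opNormA_le_opNormA h𝔹sa h𝔹𝔹 hsT hTs)
  -- cross term vanishes
  have cross : ∀ x : H, (inner ℂ (B (Ps x)) (B (Qs x)) : ℂ) = 0 := by
    intro x
    rw [← innerA hBsa hBB]
    have c1 : (inner ℂ (A (Ps x)) (Qs x) : ℂ) = inner ℂ ((adjoint Qs) (A (Ps x))) x := by
      rw [adjoint_inner_left]
    have c2 : (adjoint Qs) (A (Ps x)) = A (Q (Ps x)) := by
      have h3 := congrArg (fun (F : H →L[ℂ] H) => F (Ps x)) hsQ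
      simp only [comp_apply] at h3
      exact h3.symm
    have c3 : A (Q (Ps x)) = 0 := by
      have h3 := congrArg (fun (F : H →L[ℂ] H) => F x) h0'
      simpa using h3
    rw [c1, c2, c3, inner_zero_left]
  -- norm identity
  have sqq : ∀ {a b : ℝ}, 0 ≤ a → 0 ≤ b → a ^ 2 = b ^ 2 → a = b := by
    intro a b ha hb h
    rw [← Real.sqrt_sq ha, h, Real.sqrt_sq hb]
  have normRs : ∀ (ε : ℝ) (hε : ε = 1 ∨ ε = -1) (x : H),
      ‖B (Ps x) + ε • B (Qs x)‖ ^ 2 = ‖B (Ps x)‖ ^ 2 + ‖B (Qs x)‖ ^ 2 := by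
    intro ε hε x
    rcases hε with h | h <;> subst h
    · rw [one_smul, @norm_add_sq ℂ, cross]
      simp
    · rw [neg_smul, one_smul, ← sub_eq_add_neg, @norm_sub_sq ℂ, cross]
      simp
  -- application helpers
  have Bapp : ∀ a b : H, (blk B 0 0 B) (((WithLp.prodContinuousLinearEquiv 2 ℂ H H)).symm (a, b)) = ((WithLp.prodContinuousLinearEquiv 2 ℂ H H)).symm (B a, B b) := by
    intro a b; rw [blk_apply]; simp
  have Tsapp : ∀ a b : H, (blk Ps 0 Qs 0) (((WithLp.prodContinuousLinearEquiv 2 ℂ H H)).symm (a, b)) = ((WithLp.prodContinuousLinearEquiv 2 ℂ H H)).symm (Ps a, Qs a) := by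
    intro a b; rw [blk_apply]; simp
  have normsymm : ∀ a b : H, ‖((WithLp.prodContinuousLinearEquiv 2 ℂ H H)).symm (a, b)‖ ^ 2 = ‖a‖ ^ 2 + ‖b‖ ^ 2 := by
    intro a b
    have h3 := normE (((WithLp.prodContinuousLinearEquiv 2 ℂ H H)).symm (a, b))
    simpa using h3
  have vnTs : ∀ ξ : WithLp 2 (H × H), vnormA (AA A) ((blk Ps 0 Qs 0) ξ)
      = Real.sqrt (‖B (Ps ((WithLp.prodContinuousLinearEquiv 2 ℂ H H) ξ).1)‖ ^ 2 + ‖B (Qs ((WithLp.prodContinuousLinearEquiv 2 ℂ H H) ξ).1)‖ ^ 2) := by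
    intro ξ
    rw [vnormA_eq h𝔹sa h𝔹𝔹]
    have h3 : (blk Ps 0 Qs 0) ξ = ((WithLp.prodContinuousLinearEquiv 2 ℂ H H)).symm (Ps ((WithLp.prodContinuousLinearEquiv 2 ℂ H H) ξ).1, Qs ((WithLp.prodContinuousLinearEquiv 2 ℂ H H) ξ).1) :=
      Tsapp ((WithLp.prodContinuousLinearEquiv 2 ℂ H H) ξ).1 ((WithLp.prodContinuousLinearEquiv 2 ℂ H H) ξ).2
    rw [h3, Bapp]
    have h4 := normsymm (B (Ps ((WithLp.prodContinuousLinearEquiv 2 ℂ H H) ξ).1)) (B (Qs ((WithLp.prodContinuousLinearEquiv 2 ℂ H H) ξ).1))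
    rw [← Real.sqrt_sq (norm_nonneg (((WithLp.prodContinuousLinearEquiv 2 ℂ H H)).symm (B (Ps ((WithLp.prodContinuousLinearEquiv 2 ℂ H H) ξ).1), B (Qs ((WithLp.prodContinuousLinearEquiv 2 ℂ H H) ξ).1)))), h4]
  have hRs2p : ∀ x : H, ‖B ((Ps + Qs) x)‖ ^ 2 = ‖B (Ps x)‖ ^ 2 + ‖B (Qs x)‖ ^ 2 := by
    intro x
    have h3 : B ((Ps + Qs) x) = B (Ps x) + (1:ℝ) • B (Qs x) := by
      simp [ContinuousLinearMap.add_apply]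
    rw [h3, normRs 1 (Or.inl rfl)]
  have hRs2m : ∀ x : H, ‖B ((Ps - Qs) x)‖ ^ 2 = ‖B (Ps x)‖ ^ 2 + ‖B (Qs x)‖ ^ 2 := by
    intro x
    have h3 : B ((Ps - Qs) x) = B (Ps x) + (-1:ℝ) • B (Qs x) := by
      simp [ContinuousLinearMap.sub_apply, sub_eq_add_neg]
    rw [h3, normRs (-1) (Or.inr rfl)]
  -- the middle identity
  have mid : ∀ (Rs : H →L[ℂ] H) (cR : ℝ), (∀ x, ‖B (Rs x)‖ ≤ cR * ‖B x‖) →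
      (∀ x : H, ‖B (Rs x)‖ ^ 2 = ‖B (Ps x)‖ ^ 2 + ‖B (Qs x)‖ ^ 2) →
      opNormA (AA A) (blk Ps 0 Qs 0) = opNormA A Rs := by
    intro Rs cR hbRs hRs2
    apply le_antisymm
    · apply Real.sSup_le _ (opNormA_nonneg A Rs)
      rintro c ⟨ξ, hξ, rfl⟩
      have hξ1 : ‖(blk B 0 0 B) ξ‖ = 1 := by rw [← vnormA_eq h𝔹sa h𝔹𝔹]; exact hξ
      have h3 : (blk B 0 0 B) ξ = ((WithLp.prodContinuousLinearEquiv 2 ℂ H H)).symm (B ((WithLp.prodContinuousLinearEquiv 2 ℂ H H) ξ).1, B ((WithLp.prodContinuousLinearEquiv 2 ℂ H H) ξ).2) :=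
        Bapp ((WithLp.prodContinuousLinearEquiv 2 ℂ H H) ξ).1 ((WithLp.prodContinuousLinearEquiv 2 ℂ H H) ξ).2
      have h4 : ‖B ((WithLp.prodContinuousLinearEquiv 2 ℂ H H) ξ).1‖ ^ 2 + ‖B ((WithLp.prodContinuousLinearEquiv 2 ℂ H H) ξ).2‖ ^ 2 = 1 := by
        rw [← normsymm, ← h3, hξ1, one_pow]
      have hx1le : ‖B ((WithLp.prodContinuousLinearEquiv 2 ℂ H H) ξ).1‖ ≤ 1 := by
        nlinarith [sq_nonneg (‖B ((WithLp.prodContinuousLinearEquiv 2 ℂ H H) ξ).1‖ - 1), sq_nonneg ‖B ((WithLp.prodContinuousLinearEquiv 2 ℂ H H) ξ).2‖,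
          norm_nonneg (B ((WithLp.prodContinuousLinearEquiv 2 ℂ H H) ξ).1)]
      have hval : vnormA (AA A) ((blk Ps 0 Qs 0) ξ) = ‖B (Rs ((WithLp.prodContinuousLinearEquiv 2 ℂ H H) ξ).1)‖ := by
        rw [vnTs ξ, ← hRs2, Real.sqrt_sq (norm_nonneg _)]
      rw [hval]
      calc ‖B (Rs ((WithLp.prodContinuousLinearEquiv 2 ℂ H H) ξ).1)‖ ≤ opNormA A Rs * ‖B ((WithLp.prodContinuousLinearEquiv 2 ℂ H H) ξ).1‖ :=
            opNormA_pointwise hBsa hBB hbRs _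
        _ ≤ opNormA A Rs * 1 := mul_le_mul_of_nonneg_left hx1le (opNormA_nonneg A Rs)
        _ = opNormA A Rs := mul_one _
    · apply Real.sSup_le _ (opNormA_nonneg (AA A) (blk Ps 0 Qs 0))
      rintro c ⟨x, hx, rfl⟩
      have hx1 : ‖B x‖ = 1 := by rw [← vnormA_eq hBsa hBB]; exact hx
      have hξ0 : vnormA (AA A) (((WithLp.prodContinuousLinearEquiv 2 ℂ H H)).symm (x, 0)) = 1 := by
        rw [vnormA_eq h𝔹sa h𝔹𝔹, Bapp, map_zero]
        have h3 := normsymm (B x) (0 : H)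
        rw [hx1] at h3
        simp only [norm_zero, one_pow] at h3
        have h4 : (0:ℝ) ^ 2 = 0 := by norm_num
        rw [h4, add_zero] at h3
        exact sqq (norm_nonneg _) zero_le_one (by rw [h3, one_pow])
      have hmem : vnormA A (Rs x) = vnormA (AA A) ((blk Ps 0 Qs 0) (((WithLp.prodContinuousLinearEquiv 2 ℂ H H)).symm (x, 0))) := by
        rw [vnormA_eq hBsa hBB, vnTs]
        simp only [ContinuousLinearEquiv.apply_symm_apply]
        rw [← hRs2, Real.sqrt_sq (norm_nonneg _)]
      rw [hmem]
      exact le_csSup (opNormA_bddAbove h𝔹sa h𝔹𝔹 hbTs) ⟨_, hξ0, rfl⟩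
  have Np : opNormA A (Ps + Qs) = opNormA A (P + Q) :=
    le_antisymm (opNormA_le_opNormA hBsa hBB hsRp hRsp)
      (opNormA_le_opNormA hBsa hBB hRsp hsRp)
  have Nm : opNormA A (Ps - Qs) = opNormA A (P - Q) :=
    le_antisymm (opNormA_le_opNormA hBsa hBB hsRm hRsm)
      (opNormA_le_opNormA hBsa hBB hRsm hsRm)
  have midp := mid (Ps + Qs) _ hbRsp hRs2p
  have midm := mid (Ps - Qs) _ hbRsm hRs2m
  have keyp : opNormA A (P + Q) = opNormA (AA A) (blk P Q 0 0) := by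
    rw [← Np, ← midp, ← hNT]
  have keym : opNormA A (P - Q) = opNormA (AA A) (blk P Q 0 0) := by
    rw [← Nm, ← midm, ← hNT]
  constructor
  · rw [keyp, keym, max_self]
    linarith [two_w]
  · rw [keyp, keym, min_self]
    exact W_le
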